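/- Let σ, σ' ∈ S_d be single cycles whose supports are not disjoint, and let S be the intersection of the supports of σ, σ' and σσ'. If S has at most 2 elements, then the number of cycles in the decomposition of σσ' into disjoint cycles is exactly the cardinality of S (in particular at most 2), and the support of each of these disjoint cycles contains exactly one element of S. -/

import Mathlib

open Equiv Equiv.Perm Finset

/-- A nonempty subset of the support of a cycle that is closed under the cycle
is the whole support. -/
private lemma aux_cycle_inv {α : Type*} [Fintype α] [DecidableEq α] {f : Equiv.Perm α}
    (hf : f.IsCycle) {E : Finset α} (hE : ∀ e ∈ E, f e ∈ E) {x : α}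
    (hx : x ∈ E) (hxs : x ∈ f.support) : f.support ⊆ E := by
  have himg : E.image f = E := by
    apply Finset.eq_of_subset_of_card_le
    · intro y hy
      obtain ⟨e, he, rfl⟩ := Finset.mem_image.mp hy
      exact hE e he
    · rw [Finset.card_image_of_injective _ f.injective]
  have hE' : ∀ e ∈ E, f⁻¹ e ∈ E := by
    intro e he
    rw [← himg] at he
    obtain ⟨u, hu, rfl⟩ := Finset.mem_image.mp he
    simpa using hu
  have key : ∀ n : ℤ, (f ^ n) x ∈ E := by
    intro n
    induction n using Int.induction_on with
    | zero => simpa using hx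
    | succ k ih =>
        have hpow : f ^ ((k : ℤ) + 1) = f * f ^ (k : ℤ) := by group
        rw [hpow, Equiv.Perm.mul_apply]
        exact hE _ ih
    | pred k ih =>
        have hpow : f ^ (-(k : ℤ) - 1) = f⁻¹ * f ^ (-(k : ℤ)) := by group
        rw [hpow, Equiv.Perm.mul_apply]
        exact hE' _ ih
  intro y hy
  obtain ⟨n, rfl⟩ := hf.sameCycle (Equiv.Perm.mem_support.mp hxs) (Equiv.Perm.mem_support.mp hy)
  exact key n

private lemma aux_mem_support_left {α : Type*} [Fintype α] [DecidableEq α]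
    {σ σ' : Equiv.Perm α} {x : α} (h1 : x ∈ σ.support) (h2 : x ∉ σ'.support) :
    x ∈ (σ * σ').support := by
  rw [Equiv.Perm.mem_support, Equiv.Perm.mul_apply, Equiv.Perm.notMem_support.mp h2]
  exact Equiv.Perm.mem_support.mp h1

private lemma aux_mem_support_right {α : Type*} [Fintype α] [DecidableEq α]
    {σ σ' : Equiv.Perm α} {x : α} (h1 : x ∈ σ'.support) (h2 : x ∉ σ.support) :
    x ∈ (σ * σ').support := by
  by_cases hσ : σ' x ∈ σ.support
  · have hmem : (σ * σ') x ∈ σ.support := by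
      rw [Equiv.Perm.mul_apply]
      exact Equiv.Perm.apply_mem_support.mpr hσ
    rw [Equiv.Perm.mem_support]
    intro heq
    rw [heq] at hmem
    exact h2 hmem
  · rw [Equiv.Perm.mem_support, Equiv.Perm.mul_apply, Equiv.Perm.notMem_support.mp hσ]
    exact Equiv.Perm.mem_support.mp h1

/-- Key lemma (a): every cycle factor of `σ * σ'` meets
`σ.support ∩ σ'.support ∩ (σ * σ').support`. -/
private lemma aux_keyA {α : Type*} [Fintype α] [DecidableEq α] {σ σ' : Equiv.Perm α}
    (h : σ.IsCycle) (h' : σ'.IsCycle) (hnd : ¬Disjoint σ.support σ'.support)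
    {c : Equiv.Perm α} (hc : c ∈ (σ * σ').cycleFactorsFinset) :
    (c.support ∩ (σ.support ∩ σ'.support ∩ (σ * σ').support)).Nonempty := by
  by_contra hno
  rw [Finset.not_nonempty_iff_eq_empty, Finset.eq_empty_iff_forall_notMem] at hno
  obtain ⟨hcyc, happ⟩ := Equiv.Perm.mem_cycleFactorsFinset_iff.mp hc
  have hsub : c.support ⊆ (σ * σ').support :=
    Equiv.Perm.mem_cycleFactorsFinset_support_le hc
  have hnotI : ∀ x ∈ c.support, ¬(x ∈ σ.support ∧ x ∈ σ'.support) := by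
    intro x hx hmem
    exact hno x (Finset.mem_inter.mpr ⟨hx,
      Finset.mem_inter.mpr ⟨Finset.mem_inter.mpr hmem, hsub hx⟩⟩)
  obtain ⟨w, hw⟩ := Finset.not_disjoint_iff.mp hnd
  obtain ⟨hw1, hw2⟩ := hw
  -- E : points of the cycle in  σ.support \ σ'.support
  set E := c.support ∩ (σ.support \ σ'.support) with hE_def
  have hceq : ∀ e ∈ c.support, e ∈ σ.support → e ∉ σ'.support → c e = σ e := by
    intro e he heA heB
    rw [happ e he, Equiv.Perm.mul_apply, Equiv.Perm.notMem_support.mp heB]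
  have hEc : ∀ e ∈ E, c e ∈ E := by
    intro e he
    rw [hE_def, Finset.mem_inter, Finset.mem_sdiff] at he
    obtain ⟨he1, heA, heB⟩ := he
    have hcs : c e ∈ c.support := Equiv.Perm.apply_mem_support.mpr he1
    have hA : c e ∈ σ.support := by
      rw [hceq e he1 heA heB]
      exact Equiv.Perm.apply_mem_support.mpr heA
    have hB : c e ∉ σ'.support := fun hb => hnotI _ hcs ⟨hA, hb⟩
    rw [hE_def, Finset.mem_inter, Finset.mem_sdiff]
    exact ⟨hcs, hA, hB⟩
  by_cases hEne : E.Nonempty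
  · obtain ⟨x, hx⟩ := hEne
    have hx' := hx
    rw [hE_def, Finset.mem_inter, Finset.mem_sdiff] at hx'
    have h1 : c.support ⊆ E := aux_cycle_inv hcyc hEc hx hx'.1
    have hσc : ∀ e ∈ σ.support, σ e ∈ σ.support := fun e he =>
      Equiv.Perm.apply_mem_support.mpr he
    have hEc' : ∀ e ∈ c.support, σ e ∈ c.support := by
      intro e he
      have heE := h1 he
      rw [hE_def, Finset.mem_inter, Finset.mem_sdiff] at heE
      have : σ e = c e := (hceq e he heE.2.1 heE.2.2).symm
      rw [this]
      exact Equiv.Perm.apply_mem_support.mpr he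
    have h2 : σ.support ⊆ c.support := aux_cycle_inv h hEc' hx'.1 hx'.2.1
    have := h1 (h2 hw1)
    rw [hE_def, Finset.mem_inter, Finset.mem_sdiff] at this
    exact this.2.2 hw2
  · rw [Finset.not_nonempty_iff_eq_empty] at hEne
    -- every point of the cycle is in σ'.support \ σ.support
    have hBA : ∀ e ∈ c.support, e ∈ σ'.support ∧ e ∉ σ.support := by
      intro e he
      have heA : e ∉ σ.support := by
        intro hA
        by_cases hB : e ∈ σ'.support
        · exact hnotI e he ⟨hA, hB⟩
        · have : e ∈ E := by
            rw [hE_def, Finset.mem_inter, Finset.mem_sdiff]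
            exact ⟨he, hA, hB⟩
          rw [hEne] at this
          exact absurd this (Finset.notMem_empty e)
      have heB : e ∈ σ'.support := by
        by_contra hB
        have : (σ * σ') e = e := by
          rw [Equiv.Perm.mul_apply, Equiv.Perm.notMem_support.mp hB,
            Equiv.Perm.notMem_support.mp heA]
        exact (Equiv.Perm.mem_support.mp (hsub he)) this
      exact ⟨heB, heA⟩
    have hσ'c : ∀ e ∈ c.support, σ' e ∈ c.support := by
      intro e he
      have h1 : c e = σ (σ' e) := by rw [happ e he, Equiv.Perm.mul_apply]
      have h2 : σ' e ∉ σ.support := by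
        intro hmem
        have h3 : c e ∈ σ.support := by
          rw [h1]; exact Equiv.Perm.apply_mem_support.mpr hmem
        exact (hBA (c e) (Equiv.Perm.apply_mem_support.mpr he)).2 h3
      have : c e = σ' e := by rw [h1, Equiv.Perm.notMem_support.mp h2]
      rw [← this]
      exact Equiv.Perm.apply_mem_support.mpr he
    obtain ⟨x, hx⟩ := hcyc.nonempty_support
    have h2 : σ'.support ⊆ c.support := aux_cycle_inv h' hσ'c hx (hBA x hx).1
    exact (hBA w (h2 hw2)).2 hw1

/-- Key lemma (b): if the triple intersection has exactly two elements then
`σ * σ'` cannot be a single cycle (parity argument). -/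
private lemma aux_keyB {α : Type*} [Fintype α] [DecidableEq α] {σ σ' : Equiv.Perm α}
    (h : σ.IsCycle) (h' : σ'.IsCycle)
    (hcard : (σ.support ∩ σ'.support ∩ (σ * σ').support).card = 2)
    (hcyc : (σ * σ').IsCycle) : False := by
  set A := σ.support with hA
  set B := σ'.support with hB
  set S := σ.support ∩ σ'.support ∩ (σ * σ').support with hS
  -- support of the product is the symmetric difference together with S
  have hsupp : (σ * σ').support = ((A ∪ B) \ (A ∩ B)) ∪ S := by
    ext x
    constructor
    · intro hx
      by_cases hxa : x ∈ A <;> by_cases hxb : x ∈ B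
      · exact Finset.mem_union_right _
          (by rw [hS]; exact Finset.mem_inter.mpr ⟨Finset.mem_inter.mpr ⟨hxa, hxb⟩, hx⟩)
      · exact Finset.mem_union_left _ (Finset.mem_sdiff.mpr
          ⟨Finset.mem_union_left _ hxa, fun hm => hxb (Finset.mem_inter.mp hm).2⟩)
      · exact Finset.mem_union_left _ (Finset.mem_sdiff.mpr
          ⟨Finset.mem_union_right _ hxb, fun hm => hxa (Finset.mem_inter.mp hm).1⟩)
      · exfalso
        apply Equiv.Perm.mem_support.mp hx
        rw [Equiv.Perm.mul_apply, Equiv.Perm.notMem_support.mp hxb,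
          Equiv.Perm.notMem_support.mp hxa]
    · intro hx
      rcases Finset.mem_union.mp hx with hx | hx
      · rw [Finset.mem_sdiff, Finset.mem_union] at hx
        rcases hx.1 with hxa | hxb
        · have hxb : x ∉ B := fun hb => hx.2 (Finset.mem_inter.mpr ⟨hxa, hb⟩)
          exact aux_mem_support_left hxa hxb
        · have hxa : x ∉ A := fun ha => hx.2 (Finset.mem_inter.mpr ⟨ha, hxb⟩)
          exact aux_mem_support_right hxb hxa
      · rw [hS] at hx
        exact (Finset.mem_inter.mp hx).2
  -- cardinality computation
  have hdisj : Disjoint ((A ∪ B) \ (A ∩ B)) S := by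
    exact Finset.disjoint_of_subset_right (by rw [hS]; exact Finset.inter_subset_left)
      Finset.sdiff_disjoint
  have hn : (σ * σ').support.card = ((A ∪ B) \ (A ∩ B)).card + 2 := by
    rw [hsupp, Finset.card_union_of_disjoint hdisj, hcard]
  have hu : ((A ∪ B) \ (A ∩ B)).card + (A ∩ B).card = (A ∪ B).card :=
    Finset.card_sdiff_add_card_eq_card Finset.inter_subset_union
  have hie : (A ∪ B).card + (A ∩ B).card = A.card + B.card :=
    Finset.card_union_add_card_inter A B
  have hpar : (σ * σ').support.card + 2 * (A ∩ B).card = A.card + B.card + 2 := by omega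
  -- sign computation
  have hsgn : Equiv.Perm.sign (σ * σ') = Equiv.Perm.sign σ * Equiv.Perm.sign σ' := map_mul _ _ _
  rw [hcyc.sign, h.sign, h'.sign] at hsgn
  have hsgn2 : -(-1 : ℤˣ) ^ (σ * σ').support.card = (-1) ^ (A.card + B.card) := by
    rw [hsgn, neg_mul_neg, ← pow_add]
  have hpow : (-1 : ℤˣ) ^ (σ * σ').support.card = (-1) ^ (A.card + B.card) := by
    have : (-1 : ℤˣ) ^ ((σ * σ').support.card + 2 * (A ∩ B).card) =
        (-1) ^ (A.card + B.card + 2) := by rw [hpar]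
    rw [pow_add, pow_add, pow_mul] at this
    simpa using this
  rw [hpow] at hsgn2
  have : ((-1 : ℤˣ) ^ (A.card + B.card) : ℤˣ) = 1 ∨
      ((-1 : ℤˣ) ^ (A.card + B.card) : ℤˣ) = -1 := Int.units_eq_one_or _
  rcases this with heq | heq <;> rw [heq] at hsgn2 <;> exact absurd (congrArg Units.val hsgn2) (by norm_num)

/-- Let `σ, σ'` be non-disjoint cycles in `S_d` and let `S` be the intersection of the
supports of `σ`, `σ'` and `σσ'`. If `S` has at most two elements, then the number of
disjoint cycles in the cycle decomposition of `σσ'` equals the cardinality of `S`, and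
the support of each of these cycles contains exactly one element of `S`. -/
theorem cycle_count_eq_triple_support_card
    (d : ℕ) (σ σ' : Equiv.Perm (Fin d))
    (h : σ.IsCycle) (h' : σ'.IsCycle)
    (hnd : ¬Disjoint σ.support σ'.support)
    (hS : (σ.support ∩ σ'.support ∩ (σ * σ').support).card ≤ 2) :
    (σ * σ').cycleFactorsFinset.card =
      (σ.support ∩ σ'.support ∩ (σ * σ').support).card ∧
    ∀ c ∈ (σ * σ').cycleFactorsFinset,
      (c.support ∩ (σ.support ∩ σ'.support ∩ (σ * σ').support)).card = 1 := by
  set S := σ.support ∩ σ'.support ∩ (σ * σ').support with hSdef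
  have hScases : S.card = 0 ∨ S.card = 1 ∨ S.card = 2 := by omega
  have hSsupp : S ⊆ (σ * σ').support := by
    rw [hSdef]; exact Finset.inter_subset_right
  rcases hScases with h0 | h1 | h2
  · -- S empty : the product is the identity
    have hSe : S = ∅ := Finset.card_eq_zero.mp h0
    have hfe : (σ * σ').cycleFactorsFinset = ∅ := by
      rw [Finset.eq_empty_iff_forall_notMem]
      intro c hc
      obtain ⟨x, hx⟩ := aux_keyA h h' hnd hc
      rw [← hSdef, hSe] at hx
      simp at hx
    rw [hfe, h0]
    exact ⟨rfl, fun c hc => absurd hc (Finset.notMem_empty c)⟩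
  · -- S = {a} : the product is a single cycle through a
    obtain ⟨a, hSa⟩ := Finset.card_eq_one.mp h1
    have haS : a ∈ S := by rw [hSa]; exact Finset.mem_singleton_self a
    have ha_supp : a ∈ (σ * σ').support := hSsupp haS
    have hca : (σ * σ').cycleOf a ∈ (σ * σ').cycleFactorsFinset :=
      Equiv.Perm.cycleOf_mem_cycleFactorsFinset_iff.mpr ha_supp
    have hall : ∀ c ∈ (σ * σ').cycleFactorsFinset, a ∈ c.support ∧ c = (σ * σ').cycleOf a := by
      intro c hc
      obtain ⟨x, hx⟩ := aux_keyA h h' hnd hc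
      rw [Finset.mem_inter, ← hSdef] at hx
      have hxa : x = a := by rw [hSa] at hx; exact Finset.mem_singleton.mp hx.2
      rw [hxa] at hx
      exact ⟨hx.1, Equiv.Perm.cycle_is_cycleOf hx.1 hc⟩
    have hfac : (σ * σ').cycleFactorsFinset = {(σ * σ').cycleOf a} :=
      Finset.eq_singleton_iff_unique_mem.mpr ⟨hca, fun c hc => (hall c hc).2⟩
    constructor
    · rw [hfac, h1]; rfl
    · intro c hc
      have hfix : c.support ∩ S = {a} := by
        apply Finset.eq_singleton_iff_unique_mem.mpr
        refine ⟨Finset.mem_inter.mpr ⟨(hall c hc).1, haS⟩, ?_⟩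
        intro x hx
        rw [Finset.mem_inter, hSa] at hx
        exact Finset.mem_singleton.mp hx.2
      rw [hfix]
      rfl
  · -- S = {a, b}
    obtain ⟨a, b, hab, hSab⟩ := Finset.card_eq_two.mp h2
    have haS : a ∈ S := by rw [hSab]; exact Finset.mem_insert_self a _
    have hbS : b ∈ S := by rw [hSab]; exact Finset.mem_insert_of_mem (Finset.mem_singleton_self b)
    have ha_supp : a ∈ (σ * σ').support := hSsupp haS
    have hb_supp : b ∈ (σ * σ').support := hSsupp hbS
    have hca : (σ * σ').cycleOf a ∈ (σ * σ').cycleFactorsFinset :=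
      Equiv.Perm.cycleOf_mem_cycleFactorsFinset_iff.mpr ha_supp
    have hcb : (σ * σ').cycleOf b ∈ (σ * σ').cycleFactorsFinset :=
      Equiv.Perm.cycleOf_mem_cycleFactorsFinset_iff.mpr hb_supp
    have hmemS : ∀ x ∈ S, x = a ∨ x = b := by
      intro x hx
      rw [hSab, Finset.mem_insert, Finset.mem_singleton] at hx
      exact hx
    have hall : ∀ c ∈ (σ * σ').cycleFactorsFinset,
        (a ∈ c.support ∧ c = (σ * σ').cycleOf a) ∨
        (b ∈ c.support ∧ c = (σ * σ').cycleOf b) := by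
      intro c hc
      obtain ⟨x, hx⟩ := aux_keyA h h' hnd hc
      rw [Finset.mem_inter, ← hSdef] at hx
      rcases hmemS x hx.2 with rfl | rfl
      · exact Or.inl ⟨hx.1, Equiv.Perm.cycle_is_cycleOf hx.1 hc⟩
      · exact Or.inr ⟨hx.1, Equiv.Perm.cycle_is_cycleOf hx.1 hc⟩
    have hne : (σ * σ').cycleOf a ≠ (σ * σ').cycleOf b := by
      intro heq
      have hfac : (σ * σ').cycleFactorsFinset = {(σ * σ').cycleOf a} := by
        apply Finset.eq_singleton_iff_unique_mem.mpr
        refine ⟨hca, fun c hc => ?_⟩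
        rcases hall c hc with ⟨_, hce⟩ | ⟨_, hce⟩
        · exact hce
        · rw [hce, ← heq]
      have hpc : (σ * σ').IsCycle :=
        (Equiv.Perm.cycleFactorsFinset_eq_singleton_iff.mp hfac).1
      exact aux_keyB h h' h2 hpc
    have hfac : (σ * σ').cycleFactorsFinset =
        {(σ * σ').cycleOf a, (σ * σ').cycleOf b} := by
      apply Finset.Subset.antisymm
      · intro c hc
        rcases hall c hc with ⟨_, hce⟩ | ⟨_, hce⟩
        · rw [hce]; exact Finset.mem_insert_self _ _
        · rw [hce]; exact Finset.mem_insert_of_mem (Finset.mem_singleton_self _)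
      · intro c hc
        rcases Finset.mem_insert.mp hc with rfl | hc
        · exact hca
        · rw [Finset.mem_singleton.mp hc]; exact hcb
    constructor
    · rw [hfac, h2, Finset.card_insert_of_notMem (fun hm => hne (Finset.mem_singleton.mp hm)),
        Finset.card_singleton]
    · intro c hc
      rcases hall c hc with ⟨hmem, hce⟩ | ⟨hmem, hce⟩
      · have hfix : c.support ∩ S = {a} := by
          apply Finset.eq_singleton_iff_unique_mem.mpr
          refine ⟨Finset.mem_inter.mpr ⟨hmem, haS⟩, ?_⟩
          intro x hx
          rw [Finset.mem_inter] at hx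
          rcases hmemS x hx.2 with rfl | rfl
          · rfl
          · exfalso
            apply hne
            rw [← hce, Equiv.Perm.cycle_is_cycleOf hx.1 hc]
        rw [hfix]; rfl
      · have hfix : c.support ∩ S = {b} := by
          apply Finset.eq_singleton_iff_unique_mem.mpr
          refine ⟨Finset.mem_inter.mpr ⟨hmem, hbS⟩, ?_⟩
          intro x hx
          rw [Finset.mem_inter] at hx
          rcases hmemS x hx.2 with rfl | rfl
          · exfalso
            apply hne
            rw [← hce, Equiv.Perm.cycle_is_cycleOf hx.1 hc]
          · rfl
        rw [hfix]; rfl
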